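/- arXiv:2510.16655 — 2 statements merged into one kernel-verified Lean document; each statement's English description precedes it below -/
import Mathlib

section
/- Consider the vanilla Bregman stochastic proximal point algorithm (BSPPA), i.e. the variance-reduced BSPPA with e_k ≡ 0. Suppose E[g_k | 𝔉_k] ∈ ∂F(x_k) a.s. and there is σ_*² ≥ 0 such that E[D_h(x_k, z_{k+1}) | 𝔉_k] ≤ α_k² σ_*² a.s. for all k. Then for every k ≥ 1: E[F(x̄_k) − F(x_*)] ≤ D_h(x_*, x_0) / Σ_{t=0}^{k−1} α_t + σ_*² · (Σ_{t=0}^{k−1} α_t²) / (Σ_{t=0}^{k−1} α_t), where x̄_k := Σ_{t=0}^{k−1} (α_t / Σ_{s=0}^{k−1} α_s) x_t. -/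
open MeasureTheory ProbabilityTheory Set Finset
open scoped RealInnerProductSpace ENNReal Topology

noncomputable section

abbrev E (d : ℕ) := EuclideanSpace ℝ (Fin d)

/-- Bregman distance of `φ` with gradient field `φ'`. -/
def breg {d : ℕ} (φ : E d → ℝ) (φ' : E d → E d) (x y : E d) : ℝ :=
  φ x - φ y - ⟪φ' y, x - y⟫

/-- Subdifferential of a real-valued convex function. -/
def subdiff {d : ℕ} (f : E d → ℝ) (x : E d) : Set (E d) :=
  {g | ∀ y, f x + ⟪g, y - x⟫ ≤ f y}

lemma breg_threepoint {d : ℕ} (h : E d → ℝ) (h' : E d → E d) (a y zz g : E d) (α : ℝ)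
    (hzz : h' zz = h' y - α • g) :
    α * ⟪g, y - a⟫ = breg h h' a y - breg h h' a zz + breg h h' y zz := by
  simp only [breg, hzz, inner_sub_left, inner_sub_right, real_inner_smul_left]
  ring

lemma deriv_line {d : ℕ} (h : E d → ℝ) (g v y : E d) (hg : HasGradientAt h g y) :
    HasDerivAt (fun t : ℝ => h (y + t • v)) ⟪g, v⟫ 0 := by
  have hc : HasDerivAt (fun t : ℝ => y + t • v) v 0 := by
    simpa using ((hasDerivAt_id (0:ℝ)).smul_const v).const_add y
  have hf : HasFDerivAt h ((InnerProductSpace.toDual ℝ (E d)) g) (y + (0:ℝ) • v) := by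
    simpa using hg.hasFDerivAt
  have := hf.comp_hasDerivAt (0:ℝ) hc
  simp only [InnerProductSpace.toDual_apply_apply] at this
  exact this

lemma slope_le {φ : ℝ → ℝ} {L B : ℝ} (hφ : HasDerivAt φ L 0)
    (hb : ∀ t : ℝ, t ∈ Set.Ioc (0:ℝ) 1 → φ t - φ 0 ≤ t * B) : L ≤ B := by
  have ht : Filter.Tendsto (slope φ 0) (𝓝[>] 0) (𝓝 L) :=
    (hasDerivAt_iff_tendsto_slope.mp hφ).mono_left
      (nhdsWithin_mono _ (by intro t ht; exact ne_of_gt ht))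
  refine le_of_tendsto ht ?_
  filter_upwards [Ioc_mem_nhdsGT_of_mem (by norm_num : (0:ℝ) ∈ Set.Ico (0:ℝ) 1)] with t ht'
  have h0 : 0 < t := ht'.1
  have : slope φ 0 t = (φ t - φ 0) / t := by simp [slope_def_field]
  rw [this, div_le_iff₀ h0]
  simpa [mul_comm] using hb t ht'

lemma grad_subgrad {d : ℕ} {s : Set (E d)} (h : E d → ℝ) (g : E d)
    (hconv : ConvexOn ℝ s h) {y x : E d} (hy : y ∈ interior s)
    (hgrad : HasGradientAt h g y) (hx : x ∈ s) :
    h y + ⟪g, x - y⟫ ≤ h x := by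
  have hderiv := deriv_line h g (x - y) y hgrad
  have key : ⟪g, x - y⟫ ≤ h x - h y := by
    refine slope_le hderiv ?_
    intro t ht
    have hmem : y + t • (x - y) = (1 - t) • y + t • x := by
      rw [smul_sub, sub_smul]; module
    have := hconv.2 (interior_subset hy) hx (by linarith [ht.2] : (0:ℝ) ≤ 1 - t)
      (le_of_lt ht.1) (by ring)
    simp only [smul_eq_mul] at this
    rw [hmem]
    calc h ((1 - t) • y + t • x) - h ((y : E d) + (0:ℝ) • (x - y))
        ≤ (1 - t) * h y + t * h x - h y := by
          simp only [zero_smul, add_zero]; linarith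
      _ = t * (h x - h y) := by ring
  linarith

lemma breg_nonneg {d : ℕ} {s : Set (E d)} (h : E d → ℝ) (h' : E d → E d)
    (hconv : ConvexOn ℝ s h) {y x : E d} (hy : y ∈ interior s)
    (hgrad : HasGradientAt h (h' y) y) (hx : x ∈ s) :
    0 ≤ breg h h' x y := by
  have := grad_subgrad h (h' y) hconv hy hgrad hx
  simp only [breg]; linarith

/-- Key inequality for the Bregman proximal step. -/
lemma prox_key {d : ℕ} {C : Set (E d)} (hC : Convex ℝ C) (h : E d → ℝ) (h' : E d → E d)
    (f : E d → ℝ) (hf : ConvexOn ℝ univ f) (α : ℝ) (hα : 0 < α)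
    {xk xp w : E d} (hxp : xp ∈ interior C) (hw : w ∈ closure C)
    (hgrad : HasGradientAt h (h' xp) xp)
    (hmin : IsMinOn (fun u => f u + α⁻¹ * breg h h' u xk) (closure C) xp) :
    α * f xp + breg h h' xp xk + breg h h' w xp ≤ α * f w + breg h h' w xk := by
  have hxpc : xp ∈ closure C := subset_closure (interior_subset hxp)
  set v := w - xp with hv
  have hderiv := deriv_line h (h' xp) v xp hgrad
  set P : ℝ := ⟪h' xk, xp - xk⟫ with hP
  set Q : ℝ := ⟪h' xk, w - xk⟫ with hQ
  have key : -⟪h' xp, v⟫ ≤ α * (f w - f xp) + P - Q := by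
    have hneg : HasDerivAt (fun t : ℝ => -(h (xp + t • v))) (-⟪h' xp, v⟫) 0 := hderiv.neg
    refine slope_le hneg ?_
    intro t ht
    have hco : xp + t • v = (1 - t) • xp + t • w := by
      rw [hv, smul_sub, sub_smul]; module
    have hmemC : xp + t • v ∈ closure C := by
      rw [hco]
      exact hC.closure hxpc hw (by linarith [ht.2]) ht.1.le (by ring)
    have ineq0 : f xp + α⁻¹ * breg h h' xp xk
        ≤ f (xp + t • v) + α⁻¹ * breg h h' (xp + t • v) xk := hmin hmemC
    have ineq1 : α * f xp + breg h h' xp xk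
        ≤ α * f (xp + t • v) + breg h h' (xp + t • v) xk := by
      have h2 := mul_le_mul_of_nonneg_left ineq0 hα.le
      rw [mul_add, mul_add, ← mul_assoc, ← mul_assoc, mul_inv_cancel₀ hα.ne',
        one_mul, one_mul] at h2
      exact h2
    have hfc : f (xp + t • v) ≤ (1 - t) * f xp + t * f w := by
      rw [hco]
      exact hf.2 (mem_univ xp) (mem_univ w) (by linarith [ht.2]) ht.1.le (by ring)
    have hlin : ⟪h' xk, (xp + t • v) - xk⟫ = (1 - t) * P + t * Q := by
      have hd : (xp + t • v) - xk = (1 - t) • (xp - xk) + t • (w - xk) := by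
        rw [hv]; module
      rw [hd, inner_add_right, real_inner_smul_right, real_inner_smul_right]
    have hbregt : breg h h' (xp + t • v) xk
        = h (xp + t • v) - h xk - ((1 - t) * P + t * Q) := by
      rw [breg, hlin]
    have hbregp : breg h h' xp xk = h xp - h xk - P := rfl
    have hmul := mul_le_mul_of_nonneg_left hfc (by positivity : (0:ℝ) ≤ α)
    simp only [zero_smul, add_zero]
    rw [hbregt, hbregp] at ineq1
    nlinarith [ineq1, hmul]
  have hbw : breg h h' w xp = h w - h xp - ⟪h' xp, v⟫ := rfl
  have hb1 : breg h h' xp xk = h xp - h xk - P := rfl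
  have hb2 : breg h h' w xk = h w - h xk - Q := rfl
  rw [hbw, hb1, hb2]
  linarith

/-- Pointwise key inequality:
`α (f(x_k) − f(x⋆)) ≤ D(x⋆,x_k) − D(x⋆,x_{k+1}) + D(x_k,z_{k+1})`. -/
lemma star_ineq {d : ℕ} {C : Set (E d)} (hC : Convex ℝ C) (h : E d → ℝ) (h' : E d → E d)
    (hconv : ConvexOn ℝ C h) (hgrad : ∀ w ∈ interior C, HasGradientAt h (h' w) w)
    (f : E d → ℝ) (hf : ConvexOn ℝ univ f) (α : ℝ) (hα : 0 < α)
    {xk xp zz g xs : E d} (hxp : xp ∈ interior C)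
    (hzz : zz ∈ interior C) (hxs : xs ∈ C)
    (hg : g ∈ subdiff f xk) (hzeq : h' zz = h' xk - α • g)
    (hmin : IsMinOn (fun u => f u + α⁻¹ * breg h h' u xk) (closure C) xp) :
    α * (f xk - f xs) ≤ breg h h' xs xk - breg h h' xs xp + breg h h' xk zz := by
  have hA := prox_key hC h h' f hf α hα hxp (subset_closure hxs) (hgrad xp hxp) hmin
  have hs1 := hg xp
  have hs1' := mul_le_mul_of_nonneg_left hs1 hα.le
  have hI2 := breg_threepoint h h' xp xk zz g α hzeq
  have hN : 0 ≤ breg h h' xp zz :=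
    breg_nonneg h h' hconv hzz (hgrad zz hzz) (interior_subset hxp)
  have e1 : ⟪g, xp - xk⟫ = ⟪g, xp⟫ - ⟪g, xk⟫ := inner_sub_right g xp xk
  have e3 : ⟪g, xk - xp⟫ = ⟪g, xk⟫ - ⟪g, xp⟫ := inner_sub_right g xk xp
  rw [e1] at hs1'
  rw [e3] at hI2
  nlinarith [hA, hs1', hI2, hN]

/-- Dominated convergence for indicators of an exhausting family of sets. -/
lemma tendsto_integral_indicator {Ω : Type} [MeasurableSpace Ω] {μ : Measure Ω}
    {g : Ω → ℝ} (hg : Integrable g μ) {A : ℕ → Set Ω} (hA : ∀ m, MeasurableSet (A m))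
    (habs : ∀ ω, ∀ᶠ m in Filter.atTop, ω ∈ A m) :
    Filter.Tendsto (fun m => ∫ ω, (A m).indicator g ω ∂μ) Filter.atTop
      (𝓝 (∫ ω, g ω ∂μ)) := by
  refine tendsto_integral_of_dominated_convergence (fun ω => |g ω|)
    (fun m => hg.aestronglyMeasurable.indicator (hA m)) hg.abs ?_ ?_
  · intro m
    filter_upwards with ω
    simpa [Real.norm_eq_abs] using norm_indicator_le_norm_self g ω (s := A m)
  · filter_upwards with ω
    refine Filter.Tendsto.congr' ?_ tendsto_const_nhds
    filter_upwards [habs ω] with m hm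
    simp [Set.indicator_of_mem hm]

/-- Theorem: sublinear rate for vanilla BSPPA, convex case. -/
theorem bsppa_vanilla_sublinear_rate
    (d n : ℕ) (hn : 0 < n)
    (C : Set (E d)) (hC : Convex ℝ C) (hCne : (interior C).Nonempty)
    (h : E d → ℝ) (h' : E d → E d)
    (hstrict : StrictConvexOn ℝ C h) (hreg : ContDiffOn ℝ 2 h (interior C))
    (hgrad : ∀ w ∈ interior C, HasGradientAt h (h' w) w)
    (f : Fin n → E d → ℝ)
    (hfconv : ∀ i, ConvexOn ℝ univ (f i)) (hflsc : ∀ i, LowerSemicontinuous (f i))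
    (F : E d → ℝ) (hForm : F = fun w => (∑ i, f i w) / n)
    (xstar : E d) (hxstarC : xstar ∈ C)
    (hxstarmin : ∀ w ∈ closure C, F xstar ≤ F w)
    -- probability setup
    {Ω : Type} [mΩ : MeasurableSpace Ω] (μ : Measure Ω) [IsProbabilityMeasure μ]
    (𝔉 : ℕ → MeasurableSpace Ω) (h𝔉mono : Monotone 𝔉) (h𝔉le : ∀ k, 𝔉 k ≤ mΩ)
    (ι : ℕ → Ω → Fin n)
    (hιunif : ∀ k j, μ {ω | ι k ω = j} = (n : ℝ≥0∞)⁻¹)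
    (hιindep : ∀ k, Indep (MeasurableSpace.comap (ι k) ⊤) (𝔉 k) μ)
    (hιiid : ∀ k l, k ≠ l → IndepFun (ι k) (ι l) μ)
    (hιmeas : ∀ k, Measurable[𝔉 (k + 1)] (ι k))
    -- the vanilla BSPPA algorithm (e ≡ 0)
    (α : ℕ → ℝ) (hα : ∀ k, 0 < α k)
    (x z gx : ℕ → Ω → E d)
    (x0 : E d) (hx0 : x0 ∈ interior C) (hx0eq : ∀ ω, x 0 ω = x0)
    (hxint : ∀ k ω, x k ω ∈ interior C)
    (hxmeas : ∀ k, Measurable[𝔉 k] (x k))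
    (halg : ∀ k ω, IsMinOn (fun w => f (ι k ω) w
        + (α k)⁻¹ * breg h h' w (x k ω)) (closure C) (x (k + 1) ω))
    (halguniq : ∀ k ω, ∀ w ∈ closure C,
      IsMinOn (fun w' => f (ι k ω) w'
        + (α k)⁻¹ * breg h h' w' (x k ω)) (closure C) w → w = x (k + 1) ω)
    -- subgradients and virtual explicit iterate
    (hgx : ∀ k ω, gx k ω ∈ subdiff (f (ι k ω)) (x k ω))
    (hzint : ∀ k ω, z (k + 1) ω ∈ interior C)
    (hz : ∀ k ω, h' (z (k + 1) ω) = h' (x k ω) - α k • gx k ω)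
    -- integrability
    (hintg : ∀ k, Integrable (gx k) μ)
    (hintD : ∀ k, Integrable (fun ω => breg h h' xstar (x k ω)) μ)
    (hintDz : ∀ k, Integrable (fun ω => breg h h' (x k ω) (z (k + 1) ω)) μ)
    (hintF : ∀ k, Integrable (fun ω => F (x k ω)) μ)
    -- unbiasedness of the subgradient estimator
    (hBi2 : ∀ k, ∀ᵐ ω ∂μ, condExp (𝔉 k) μ (gx k) ω ∈ subdiff F (x k ω))
    -- bounded variance: E[D_h(x_k, z_{k+1}) | 𝔉_k] ≤ α_k² σ∗²
    (σstar2 : ℝ) (hσstar2 : 0 ≤ σstar2)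
    (hBii : ∀ k, ∀ᵐ ω ∂μ,
      condExp (𝔉 k) μ (fun ω' => breg h h' (x k ω') (z (k + 1) ω')) ω
        ≤ α k ^ 2 * σstar2) :
    ∀ k, 1 ≤ k →
      (∫ ω, (F ((∑ t ∈ Finset.range k,
              (α t / (∑ s ∈ Finset.range k, α s)) • x t ω)) - F xstar) ∂μ)
        ≤ breg h h' xstar x0 / (∑ t ∈ Finset.range k, α t)
          + σstar2 * ((∑ t ∈ Finset.range k, α t ^ 2) / (∑ t ∈ Finset.range k, α t)) := by
  have hn' : (0:ℝ) < n := Nat.cast_pos.mpr hn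
  have hconvh : ConvexOn ℝ C h := hstrict.convexOn
  have hficont : ∀ i, Continuous (f i) := fun i =>
    continuousOn_univ.mp (ConvexOn.continuousOn isOpen_univ (hfconv i))
  have hFconv : ConvexOn ℝ univ F := by
    subst hForm
    refine ⟨convex_univ, fun u _ v _ a b ha hb hab => ?_⟩
    simp only [smul_eq_mul]
    have key : ∀ i : Fin n, f i (a • u + b • v) ≤ a * f i u + b * f i v := fun i =>
      by simpa using (hfconv i).2 (mem_univ u) (mem_univ v) ha hb hab
    have hsum : (∑ i, f i (a • u + b • v)) ≤ a * (∑ i, f i u) + b * (∑ i, f i v) := by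
      rw [Finset.mul_sum, Finset.mul_sum, ← Finset.sum_add_distrib]
      exact Finset.sum_le_sum fun i _ => key i
    calc (∑ i, f i (a • u + b • v)) / n
        ≤ (a * (∑ i, f i u) + b * (∑ i, f i v)) / n := by gcongr
      _ = a * ((∑ i, f i u) / n) + b * ((∑ i, f i v) / n) := by ring
  -- measurability of iterates w.r.t. the ambient σ-algebra
  have hxM : ∀ t, Measurable (x t) := fun t => (hxmeas t).mono (h𝔉le t) le_rfl
  have hιM : ∀ t, Measurable (ι t) := fun t => (hιmeas t).mono (h𝔉le (t + 1)) le_rfl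
  -- the per-step inequality in expectation
  have step : ∀ t, α t * (∫ ω, (F (x t ω) - F xstar) ∂μ)
      ≤ (∫ ω, breg h h' xstar (x t ω) ∂μ) - (∫ ω, breg h h' xstar (x (t + 1) ω) ∂μ)
        + α t ^ 2 * σstar2 := by
    intro t
    set R : Ω → ℝ := fun ω => breg h h' xstar (x t ω) - breg h h' xstar (x (t + 1) ω)
      + breg h h' (x t ω) (z (t + 1) ω) with hRdef
    have hRint : Integrable R μ := ((hintD t).sub (hintD (t + 1))).add (hintDz t)
    have hstar : ∀ ω, α t * (f (ι t ω) (x t ω) - f (ι t ω) xstar) ≤ R ω := fun ω =>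
      star_ineq hC h h' hconvh hgrad (f (ι t ω)) (hfconv _) (α t) (hα t)
        (hxint (t + 1) ω) (hzint t ω) hxstarC (hgx t ω) (hz t ω) (halg t ω)
    set φ : Ω → ℝ := fun ω => f (ι t ω) (x t ω) - f (ι t ω) xstar with hφdef
    set A : ℕ → Set Ω := fun m => {ω | ‖x t ω - xstar‖ ≤ (m : ℝ)} with hAdef
    have hAmeasF : ∀ m, MeasurableSet[𝔉 t] (A m) := by
      intro m
      letI : MeasurableSpace Ω := 𝔉 t
      exact measurableSet_le (((hxmeas t).sub measurable_const).norm) measurable_const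
    have hAmeas : ∀ m, MeasurableSet (A m) := fun m => (h𝔉le t) _ (hAmeasF m)
    have habs : ∀ ω, ∀ᶠ m in Filter.atTop, ω ∈ A m := by
      intro ω
      obtain ⟨M, hM⟩ := exists_nat_ge ‖x t ω - xstar‖
      exact Filter.eventually_atTop.mpr ⟨M, fun m hm => le_trans hM (Nat.cast_le.mpr hm)⟩
    have hFint' : Integrable (fun ω => F (x t ω) - F xstar) μ :=
      (hintF t).sub (integrable_const _)
    -- the truncated inequality, for every m
    have chain : ∀ m : ℕ,
        α t * (∫ ω, (A m).indicator (fun ω' => F (x t ω') - F xstar) ω ∂μ)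
          ≤ ∫ ω, (A m).indicator R ω ∂μ := by
      intro m
      set Y : Fin n → Ω → ℝ := fun i =>
        (A m).indicator (fun ω => f i (x t ω) - f i xstar) with hYdef
      set X : Fin n → Ω → ℝ := fun i =>
        ({ω | ι t ω = i}).indicator (fun _ => (1 : ℝ)) with hXdef
      have hYmeasF : ∀ i, Measurable[𝔉 t] (Y i) := fun i =>
        (((hficont i).measurable.comp (hxmeas t)).sub measurable_const).indicator (hAmeasF m)
      have hYmeas : ∀ i, Measurable (Y i) := fun i => (hYmeasF i).mono (h𝔉le t) le_rfl
      have hYbdd : ∀ i, ∃ K : ℝ, ∀ ω, |Y i ω| ≤ K := by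
        intro i
        obtain ⟨K, hK⟩ := (isCompact_closedBall xstar (m : ℝ)).exists_bound_of_continuousOn
          ((hficont i).continuousOn)
        refine ⟨|K| + |f i xstar|, fun ω => ?_⟩
        by_cases hω : ω ∈ A m
        · have hball : x t ω ∈ Metric.closedBall xstar (m : ℝ) := by
            rw [Metric.mem_closedBall, dist_eq_norm]; exact hω
          have h1 : |f i (x t ω)| ≤ K := by simpa [Real.norm_eq_abs] using hK _ hball
          have h2 : |Y i ω| = |f i (x t ω) - f i xstar| := by
            simp [hYdef, Set.indicator_of_mem hω]
          rw [h2]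
          calc |f i (x t ω) - f i xstar| ≤ |f i (x t ω)| + |f i xstar| := abs_sub _ _
            _ ≤ |K| + |f i xstar| := by linarith [le_trans h1 (le_abs_self K)]
        · simp [hYdef, Set.indicator_of_notMem hω]
          positivity
      have hYint : ∀ i, Integrable (Y i) μ := by
        intro i
        obtain ⟨K, hK⟩ := hYbdd i
        exact Integrable.mono' (integrable_const K) (hYmeas i).aestronglyMeasurable
          (Filter.Eventually.of_forall fun ω => by simpa [Real.norm_eq_abs] using hK ω)
      have hsetι : ∀ i : Fin n, MeasurableSet[mΩ] {ω | ι t ω = i} := fun i =>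
        (hιM t) (measurableSet_singleton i)
      have hXmeasC : ∀ i, Measurable[MeasurableSpace.comap (ι t) ⊤] (X i) := by
        intro i
        have hs : MeasurableSet[MeasurableSpace.comap (ι t) ⊤] {ω | ι t ω = i} :=
          ⟨{i}, trivial, rfl⟩
        exact (measurable_const).indicator hs
      have hXint : ∀ i, Integrable (X i) μ := fun i =>
        (integrable_const (1 : ℝ)).indicator (hsetι i)
      have hindep : ∀ i, IndepFun (X i) (Y i) μ := by
        intro i
        rw [ProbabilityTheory.indepFun_iff_measure_inter_preimage_eq_mul]
        intro s s' hs hs'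
        exact (ProbabilityTheory.Indep_iff _ _ μ).mp (hιindep t) _ _
          ((hXmeasC i) hs) ((hYmeasF i) hs')
      have hXYint : ∀ i, Integrable (fun ω => X i ω * Y i ω) μ := fun i =>
        Integrable.bdd_mul (hYint i) (((measurable_const).indicator (hsetι i)).aestronglyMeasurable)
          (c := 1) (Filter.Eventually.of_forall fun ω => by
            by_cases hω : ω ∈ {ω' | ι t ω' = i} <;>
              simp [hXdef, Set.indicator_of_mem, Set.indicator_of_notMem, hω])
      have hprod : ∀ i, ∫ ω, X i ω * Y i ω ∂μ = (n : ℝ)⁻¹ * ∫ ω, Y i ω ∂μ := by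
        intro i
        have hXval : ∫ ω, X i ω ∂μ = (n : ℝ)⁻¹ := by
          rw [hXdef]
          rw [integral_indicator_const (1 : ℝ) (hsetι i)]
          rw [measureReal_def, hιunif t i]
          simp [ENNReal.toReal_inv]
        have hmul := (hindep i).integral_mul_eq_mul_integral (hXint i).aestronglyMeasurable (hYint i).aestronglyMeasurable
        simp only [Pi.mul_apply] at hmul
        rw [hmul, hXval]
      have claim1 : ∀ ω, (∑ i, X i ω * Y i ω) = (A m).indicator φ ω := by
        intro ω
        have h1 : (∑ i, X i ω * Y i ω) = Y (ι t ω) ω := by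
          rw [Finset.sum_eq_single (ι t ω)]
          · simp [hXdef, Set.indicator_of_mem]
          · intro j _ hj
            have : ω ∉ {ω' | ι t ω' = j} := fun hmem => hj (by simpa using hmem.symm)
            simp [hXdef, Set.indicator_of_notMem this]
          · intro hc
            exact absurd (Finset.mem_univ _) hc
        rw [h1]
        by_cases hω : ω ∈ A m
        · simp [hYdef, hφdef, Set.indicator_of_mem hω]
        · simp [hYdef, hφdef, Set.indicator_of_notMem hω]
      have claim2 : ∀ ω, (∑ i, (n : ℝ)⁻¹ * Y i ω)
          = (A m).indicator (fun ω' => F (x t ω') - F xstar) ω := by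
        intro ω
        rw [← Finset.mul_sum]
        by_cases hω : ω ∈ A m
        · have : (∑ i, Y i ω) = ∑ i, (f i (x t ω) - f i xstar) := by
            apply Finset.sum_congr rfl
            intro i _
            simp [hYdef, Set.indicator_of_mem hω]
          rw [this]
          rw [Set.indicator_of_mem (f := fun ω' => F (x t ω') - F xstar) hω]
          rw [Finset.sum_sub_distrib, hForm]
          field_simp
        · have : (∑ i, Y i ω) = 0 := by
            apply Finset.sum_eq_zero
            intro i _
            simp [hYdef, Set.indicator_of_notMem hω]
          rw [this, Set.indicator_of_notMem (f := fun ω' => F (x t ω') - F xstar) hω, mul_zero]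
      have hintindφ : Integrable ((A m).indicator φ) μ := by
        have : (A m).indicator φ = fun ω => ∑ i, X i ω * Y i ω := by
          funext ω; exact (claim1 ω).symm
        rw [this]
        exact integrable_finset_sum _ fun i _ => hXYint i
      have keym : ∫ ω, (A m).indicator (fun ω' => F (x t ω') - F xstar) ω ∂μ
          = ∫ ω, (A m).indicator φ ω ∂μ := by
        calc ∫ ω, (A m).indicator (fun ω' => F (x t ω') - F xstar) ω ∂μ
            = ∫ ω, (∑ i, (n : ℝ)⁻¹ * Y i ω) ∂μ := by
              apply integral_congr_ae
              exact Filter.Eventually.of_forall fun ω => (claim2 ω).symm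
          _ = ∑ i, (n : ℝ)⁻¹ * ∫ ω, Y i ω ∂μ := by
              rw [integral_finset_sum _ fun i _ => (hYint i).const_mul _]
              exact Finset.sum_congr rfl fun i _ => integral_const_mul _ _
          _ = ∑ i, ∫ ω, X i ω * Y i ω ∂μ := Finset.sum_congr rfl fun i _ => (hprod i).symm
          _ = ∫ ω, (∑ i, X i ω * Y i ω) ∂μ := (integral_finset_sum _ fun i _ => hXYint i).symm
          _ = ∫ ω, (A m).indicator φ ω ∂μ := by
              apply integral_congr_ae
              exact Filter.Eventually.of_forall fun ω => claim1 ω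
      rw [keym]
      have hmono : ∀ ω, α t * (A m).indicator φ ω ≤ (A m).indicator R ω := by
        intro ω
        by_cases hω : ω ∈ A m
        · rw [Set.indicator_of_mem hω, Set.indicator_of_mem hω]
          exact hstar ω
        · rw [Set.indicator_of_notMem hω, Set.indicator_of_notMem hω, mul_zero]
      calc α t * ∫ ω, (A m).indicator φ ω ∂μ
          = ∫ ω, α t * (A m).indicator φ ω ∂μ := (integral_const_mul _ _).symm
        _ ≤ ∫ ω, (A m).indicator R ω ∂μ :=
            integral_mono (hintindφ.const_mul _) (hRint.indicator (hAmeas m)) hmono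
    -- pass to the limit in m
    have hlimL : Filter.Tendsto
        (fun m => α t * (∫ ω, (A m).indicator (fun ω' => F (x t ω') - F xstar) ω ∂μ))
        Filter.atTop (𝓝 (α t * ∫ ω, (F (x t ω) - F xstar) ∂μ)) :=
      (tendsto_integral_indicator hFint' hAmeas habs).const_mul _
    have hlimR : Filter.Tendsto (fun m => ∫ ω, (A m).indicator R ω ∂μ)
        Filter.atTop (𝓝 (∫ ω, R ω ∂μ)) :=
      tendsto_integral_indicator hRint hAmeas habs
    have hmain : α t * (∫ ω, (F (x t ω) - F xstar) ∂μ) ≤ ∫ ω, R ω ∂μ :=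
      le_of_tendsto_of_tendsto' hlimL hlimR chain
    -- identify the integral of R and bound the variance term
    have hRsplit : ∫ ω, R ω ∂μ
        = (∫ ω, breg h h' xstar (x t ω) ∂μ) - (∫ ω, breg h h' xstar (x (t + 1) ω) ∂μ)
          + ∫ ω, breg h h' (x t ω) (z (t + 1) ω) ∂μ := by
      have hf' : Integrable (fun ω => breg h h' xstar (x t ω)
          - breg h h' xstar (x (t + 1) ω)) μ := (hintD t).sub (hintD (t + 1))
      rw [hRdef]
      rw [integral_add hf' (hintDz t), integral_sub (hintD t) (hintD (t + 1))]
    have hvar : ∫ ω, breg h h' (x t ω) (z (t + 1) ω) ∂μ ≤ α t ^ 2 * σstar2 := by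
      rw [← integral_condExp (h𝔉le t) (μ := μ)
        (f := fun ω' => breg h h' (x t ω') (z (t + 1) ω'))]
      calc ∫ ω, (condExp (𝔉 t) μ fun ω' => breg h h' (x t ω') (z (t + 1) ω')) ω ∂μ
          ≤ ∫ _ω, α t ^ 2 * σstar2 ∂μ :=
            integral_mono_ae integrable_condExp (integrable_const _) (hBii t)
        _ = α t ^ 2 * σstar2 := by simp
    linarith [hmain, hRsplit ▸ hmain]
  -- telescoping
  have nonnegD : ∀ K : ℕ, 0 ≤ ∫ ω, breg h h' xstar (x K ω) ∂μ := fun K =>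
    integral_nonneg fun ω =>
      breg_nonneg h h' hconvh (hxint K ω) (hgrad _ (hxint K ω)) hxstarC
  have hD0 : (∫ ω, breg h h' xstar (x 0 ω) ∂μ) = breg h h' xstar x0 := by
    simp only [hx0eq]
    simp
  have tele : ∀ K : ℕ, (∑ t ∈ Finset.range K, α t * (∫ ω, (F (x t ω) - F xstar) ∂μ))
      ≤ breg h h' xstar x0 + σstar2 * ∑ t ∈ Finset.range K, α t ^ 2 := by
    have main : ∀ K : ℕ, (∑ t ∈ Finset.range K, α t * (∫ ω, (F (x t ω) - F xstar) ∂μ))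
        + (∫ ω, breg h h' xstar (x K ω) ∂μ)
        ≤ breg h h' xstar x0 + σstar2 * ∑ t ∈ Finset.range K, α t ^ 2 := by
      intro K
      induction K with
      | zero => simp [hD0]
      | succ K ih =>
        rw [Finset.sum_range_succ, Finset.sum_range_succ]
        have hstep := step K
        nlinarith [hstep, ih]
    intro K
    linarith [main K, nonnegD K]
  -- final combination via Jensen's inequality
  intro k hk
  set S := ∑ t ∈ Finset.range k, α t with hSdef
  have hSpos : 0 < S :=
    Finset.sum_pos (fun t _ => hα t) (Finset.nonempty_range_iff.mpr (by omega))
  have hwnn : ∀ t ∈ Finset.range k, 0 ≤ α t / S := fun t _ => div_nonneg (hα t).le hSpos.le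
  have hwsum : (∑ t ∈ Finset.range k, α t / S) = 1 := by
    rw [← Finset.sum_div]; exact div_self hSpos.ne'
  have hjensen : ∀ ω, F (∑ t ∈ Finset.range k, (α t / S) • x t ω) - F xstar
      ≤ ∑ t ∈ Finset.range k, (α t / S) * (F (x t ω) - F xstar) := by
    intro ω
    have hmap := hFconv.map_sum_le hwnn hwsum (fun t _ => mem_univ (x t ω))
    simp only [smul_eq_mul] at hmap
    have hsplit : (∑ t ∈ Finset.range k, (α t / S) * (F (x t ω) - F xstar))
        = (∑ t ∈ Finset.range k, (α t / S) * F (x t ω)) - F xstar := by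
      simp only [mul_sub]
      rw [Finset.sum_sub_distrib, ← Finset.sum_mul, hwsum, one_mul]
    rw [hsplit]
    linarith [hmap]
  have hmem : ∀ ω, (∑ t ∈ Finset.range k, (α t / S) • x t ω) ∈ closure C := fun ω =>
    (hC.closure).sum_mem hwnn hwsum fun t _ =>
      subset_closure (interior_subset (hxint t ω))
  have hnonneg : ∀ ω, 0 ≤ F (∑ t ∈ Finset.range k, (α t / S) • x t ω) - F xstar := fun ω =>
    sub_nonneg.mpr (hxstarmin _ (hmem ω))
  have hrhsint : Integrable
      (fun ω => ∑ t ∈ Finset.range k, (α t / S) * (F (x t ω) - F xstar)) μ :=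
    integrable_finset_sum _ fun t _ => ((hintF t).sub (integrable_const _)).const_mul _
  have hIle : (∫ ω, (F (∑ t ∈ Finset.range k, (α t / S) • x t ω) - F xstar) ∂μ)
      ≤ ∫ ω, (∑ t ∈ Finset.range k, (α t / S) * (F (x t ω) - F xstar)) ∂μ :=
    integral_mono_of_nonneg (Filter.Eventually.of_forall hnonneg) hrhsint
      (Filter.Eventually.of_forall hjensen)
  have hIrhs : (∫ ω, (∑ t ∈ Finset.range k, (α t / S) * (F (x t ω) - F xstar)) ∂μ)
      = ∑ t ∈ Finset.range k, (α t / S) * (∫ ω, (F (x t ω) - F xstar) ∂μ) := by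
    have hg : ∀ t ∈ Finset.range k,
        Integrable (fun ω => (α t / S) * (F (x t ω) - F xstar)) μ := fun t _ =>
      ((hintF t).sub (integrable_const _)).const_mul _
    rw [integral_finset_sum _ hg]
    exact Finset.sum_congr rfl fun t _ => integral_const_mul _ _
  have hfin : (∑ t ∈ Finset.range k, (α t / S) * (∫ ω, (F (x t ω) - F xstar) ∂μ))
      ≤ (breg h h' xstar x0 + σstar2 * ∑ t ∈ Finset.range k, α t ^ 2) / S := by
    have hrw : (∑ t ∈ Finset.range k, (α t / S) * (∫ ω, (F (x t ω) - F xstar) ∂μ))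
        = (∑ t ∈ Finset.range k, α t * (∫ ω, (F (x t ω) - F xstar) ∂μ)) / S := by
      rw [Finset.sum_div]
      exact Finset.sum_congr rfl fun t _ => by ring
    rw [hrw]
    gcongr
    exact tele k
  have hfinal : (breg h h' xstar x0 + σstar2 * ∑ t ∈ Finset.range k, α t ^ 2) / S
      = breg h h' xstar x0 / S
        + σstar2 * ((∑ t ∈ Finset.range k, α t ^ 2) / S) := by
    rw [add_div, mul_div_assoc]
  calc (∫ ω, (F (∑ t ∈ Finset.range k, (α t / S) • x t ω) - F xstar) ∂μ)
      ≤ ∑ t ∈ Finset.range k, (α t / S) * (∫ ω, (F (x t ω) - F xstar) ∂μ) :=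
        hIrhs ▸ hIle
    _ ≤ (breg h h' xstar x0 + σstar2 * ∑ t ∈ Finset.range k, α t ^ 2) / S := hfin
    _ = _ := hfinal
end
end

section
/- Averaging lemma for Bregman mirror steps: let x ∈ int C and g_1, g_2 ∈ ℝ^d, and suppose the points x_1^+, x_2^+, x^+ ∈ int C are (uniquely) determined by ∇h(x_1^+) = ∇h(x) − g_1, ∇h(x_2^+) = ∇h(x) − g_2, ∇h(x^+) = ∇h(x) − (g_1 + g_2)/2. Then D_h(x, x^+) ≤ (1/2)[ D_h(x, x_1^+) + D_h(x, x_2^+) ] = (1/2)[ D_{h*}(∇h(x_1^+), ∇h(x)) + D_{h*}(∇h(x_2^+), ∇h(x)) ]. -/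
open Set
open scoped RealInnerProductSpace

noncomputable section

/-- Lemma: averaging of two Bregman mirror steps. -/
theorem bregman_mirror_step_averaging
    (d : ℕ)
    (C : Set (E d)) (hC : Convex ℝ C) (hCne : (interior C).Nonempty)
    -- h is a Legendre kernel, twice continuously differentiable on int C
    (h : E d → ℝ) (h' : E d → E d)
    (hstrict : StrictConvexOn ℝ C h) (hlsc : LowerSemicontinuous h)
    (hreg : ContDiffOn ℝ 2 h (interior C))
    (hgrad : ∀ w ∈ interior C, HasGradientAt h (h' w) w)
    -- the conjugate h* with gradient hs' on Sstar = dom h*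
    (hs : E d → ℝ) (hs' : E d → E d) (Sstar : Set (E d))
    (hsconv : ConvexOn ℝ Sstar hs)
    (hsgrad : ∀ u ∈ interior Sstar, HasGradientAt hs (hs' u) u)
    (hyoung : ∀ u w, ⟪u, w⟫ ≤ hs u + h w)
    (hfen : ∀ w ∈ interior C, hs (h' w) = ⟪h' w, w⟫ - h w)
    (hmap : ∀ w ∈ interior C, h' w ∈ interior Sstar)
    (hinv : ∀ w ∈ interior C, hs' (h' w) = w)
    (hmap' : ∀ u ∈ interior Sstar, hs' u ∈ interior C)
    (hinv' : ∀ u ∈ interior Sstar, h' (hs' u) = u)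
    -- the three mirror steps
    (x : E d) (hx : x ∈ interior C) (g1 g2 : E d)
    (x1 x2 xp : E d)
    (hx1 : x1 ∈ interior C) (hx2 : x2 ∈ interior C) (hxp : xp ∈ interior C)
    (hx1eq : h' x1 = h' x - g1) (hx2eq : h' x2 = h' x - g2)
    (hxpeq : h' xp = h' x - (2 : ℝ)⁻¹ • (g1 + g2)) :
    breg h h' x xp ≤ (1 / 2) * (breg h h' x x1 + breg h h' x x2) ∧
    (1 / 2) * (breg h h' x x1 + breg h h' x x2)
      = (1 / 2) * (breg hs hs' (h' x1) (h' x) + breg hs hs' (h' x2) (h' x)) := by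
  -- duality: D_h(x, y) = D_{h*}(h' y, h' x) for y ∈ int C
  have dual : ∀ y ∈ interior C, breg h h' x y = breg hs hs' (h' y) (h' x) := by
    intro y hy
    simp only [breg, hfen x hx, hfen y hy, hinv x hx, inner_sub_right]
    have c1 : ⟪x, h' y⟫ = ⟪h' y, x⟫ := real_inner_comm _ _
    have c2 : ⟪x, h' x⟫ = ⟪h' x, x⟫ := real_inner_comm _ _
    rw [c1, c2]; ring
  -- midpoint identity
  have hmid : h' xp = (2 : ℝ)⁻¹ • (h' x1 + h' x2) := by
    rw [hxpeq, hx1eq, hx2eq]; module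
  have hmid' : h' xp = (2 : ℝ)⁻¹ • h' x1 + (2 : ℝ)⁻¹ • h' x2 := by
    rw [hmid, smul_add]
  -- convexity of hs gives midpoint inequality
  have hconv := hsconv.2 (interior_subset (hmap x1 hx1))
      (interior_subset (hmap x2 hx2))
      (by norm_num : (0:ℝ) ≤ (2:ℝ)⁻¹) (by norm_num : (0:ℝ) ≤ (2:ℝ)⁻¹)
      (by norm_num : (2:ℝ)⁻¹ + (2:ℝ)⁻¹ = 1)
  rw [← hmid'] at hconv
  constructor
  · rw [dual xp hxp, dual x1 hx1, dual x2 hx2]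
    simp only [breg, hinv x hx]
    have exp : ⟪x, h' xp - h' x⟫
        = (2:ℝ)⁻¹ * ⟪x, h' x1 - h' x⟫ + (2:ℝ)⁻¹ * ⟪x, h' x2 - h' x⟫ := by
      rw [hmid']
      simp only [inner_sub_right, inner_add_right, real_inner_smul_right]
      ring
    rw [exp]
    simp only [smul_eq_mul] at hconv
    linarith
  · rw [dual x1 hx1, dual x2 hx2]
end
end
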